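/- Let φ : [0,∞) → [0,∞) be an increasing, continuous function and ν ∈ (0,1). If there exists a constant C > 0 such that e(λ) ≤ C·φ(λ)^{2ν} for all λ > 0, then there exists a constant C̃ > 0 (explicitly C̃ = 2·C^{(1−ν)/2}·c^ν with c² = C·(1 + 1/(1−ν))) such that ⟨x†, x⟩ ≤ C̃·‖φ(L*L)x‖^ν·‖x‖^{1−ν} for all x ∈ X. (Converse implication of Proposition 4.1.) -/

import Mathlib

open MeasureTheory RealInnerProductSpace Filter

lemma abel_le (e w : ℕ → ℝ) (m : ℕ) (hm : 1 ≤ m) (he0 : 0 ≤ e 0) (hw0 : 0 ≤ w 0) :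
    ∑ i ∈ Finset.range m, (e (i+1) - e i) * w i ≤
      e m * w (m-1) + ∑ i ∈ Finset.range (m-1), e (i+1) * (w i - w (i+1)) := by
  obtain ⟨k, rfl⟩ : ∃ k, m = k + 1 := ⟨m - 1, (Nat.succ_pred_eq_of_pos hm).symm⟩
  have hid : ∀ k : ℕ, ∑ i ∈ Finset.range (k+1), (e (i+1) - e i) * w i =
      e (k+1) * w k + ∑ i ∈ Finset.range k, e (i+1) * (w i - w (i+1)) - e 0 * w 0 := by
    intro k
    induction k with
    | zero => simp [Finset.sum_range_succ]; ring
    | succ k ih =>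
      rw [Finset.sum_range_succ, ih, Finset.sum_range_succ]
      ring
  rw [hid k]
  have : 0 ≤ e 0 * w 0 := mul_nonneg he0 hw0
  simp only [Nat.add_sub_cancel]
  linarith

lemma Pfacts {X : Type*} [NormedAddCommGroup X] [InnerProductSpace ℝ X]
    (E : ℝ → X →L[ℝ] X)
    (hEsa : ∀ t : ℝ, ∀ u v : X, ⟪E t u, v⟫ = ⟪u, E t v⟫)
    (hEcomp : ∀ s t : ℝ, ∀ u : X, E s (E t u) = E (min s t) u)
    (s t : ℝ) (hst : s ≤ t) :
    (∀ v w : X, ⟪E t v - E s v, w⟫ = ⟪E t v - E s v, E t w - E s w⟫) ∧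
    (∀ w : X, ‖E t w - E s w‖ ≤ ‖w‖) := by
  have hproj : ∀ w : X, E t (E t w - E s w) - E s (E t w - E s w) = E t w - E s w := by
    intro w
    simp only [map_sub, hEcomp, min_self, min_eq_right hst, min_eq_left hst]
    abel
  have hsa2 : ∀ v w : X, ⟪E t v - E s v, w⟫ = ⟪v, E t w - E s w⟫ := by
    intro v w
    rw [inner_sub_left, hEsa, hEsa, ← inner_sub_right]
  have h1 : ∀ v w : X, ⟪E t v - E s v, w⟫ = ⟪E t v - E s v, E t w - E s w⟫ := by
    intro v w
    calc ⟪E t v - E s v, w⟫ = ⟪v, E t w - E s w⟫ := hsa2 v w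
    _ = ⟪v, E t (E t w - E s w) - E s (E t w - E s w)⟫ := by rw [hproj]
    _ = ⟪E t v - E s v, E t w - E s w⟫ := (hsa2 v _).symm
  refine ⟨h1, fun w => ?_⟩
  have h2 : ‖E t w - E s w‖^2 ≤ ‖E t w - E s w‖ * ‖w‖ := by
    calc ‖E t w - E s w‖^2 = ⟪E t w - E s w, E t w - E s w⟫ := (real_inner_self_eq_norm_sq _).symm
    _ = ⟪E t w - E s w, w⟫ := (h1 w w).symm
    _ ≤ ‖E t w - E s w‖ * ‖w‖ := real_inner_le_norm _ _
  rcases le_or_gt ‖E t w - E s w‖ 0 with h | h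
  · exact h.trans (norm_nonneg w)
  · nlinarith

noncomputable def Gfun (ν q : ℝ) : ℝ :=
  q ^ (2:ℝ) + q ^ (2*ν) * ((1 - q ^ (-2:ℝ)) / (1 - q ^ (2*ν - 2)))

lemma Glim (ν : ℝ) (hν0 : 0 < ν) (hν1 : ν < 1) :
    Tendsto (fun q : ℝ => Gfun ν q) (nhdsWithin 1 (Set.Ioi 1)) (nhds (1 + 1/(1-ν))) := by
  have hslope : ∀ p : ℝ, Tendsto (fun q : ℝ => (q ^ p - 1) / (q - 1))
      (nhdsWithin 1 (Set.Ioi 1)) (nhds p) := by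
    intro p
    have h : HasDerivAt (fun x : ℝ => x ^ p) (p * (1:ℝ) ^ (p - 1)) 1 :=
      Real.hasDerivAt_rpow_const (Or.inl one_ne_zero)
    rw [hasDerivAt_iff_tendsto_slope] at h
    have h2 : Tendsto (slope (fun x : ℝ => x ^ p) 1) (nhdsWithin 1 (Set.Ioi 1)) (nhds p) := by
      have := h.mono_left (nhdsWithin_mono 1 (fun x (hx : x ∈ Set.Ioi 1) => ne_of_gt hx))
      simpa [Real.one_rpow] using this
    refine Filter.Tendsto.congr' ?_ h2
    filter_upwards [self_mem_nhdsWithin] with q hq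
    rw [slope_def_field, Real.one_rpow]
  have h1 : Tendsto (fun q : ℝ => q ^ (2:ℝ)) (nhdsWithin 1 (Set.Ioi 1)) (nhds 1) := by
    have : ContinuousAt (fun q : ℝ => q ^ (2:ℝ)) 1 :=
      Real.continuousAt_rpow_const 1 2 (Or.inl one_ne_zero)
    have h' : Tendsto (fun q : ℝ => q ^ (2:ℝ)) (nhdsWithin 1 (Set.Ioi 1)) (nhds ((1:ℝ) ^ (2:ℝ))) :=
      this.tendsto.mono_left nhdsWithin_le_nhds
    simpa [Real.one_rpow] using h'
  have h2 : Tendsto (fun q : ℝ => q ^ (2*ν)) (nhdsWithin 1 (Set.Ioi 1)) (nhds 1) := by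
    have : ContinuousAt (fun q : ℝ => q ^ (2*ν)) 1 :=
      Real.continuousAt_rpow_const 1 (2*ν) (Or.inl one_ne_zero)
    have h' : Tendsto (fun q : ℝ => q ^ (2*ν)) (nhdsWithin 1 (Set.Ioi 1)) (nhds ((1:ℝ) ^ (2*ν))) :=
      this.tendsto.mono_left nhdsWithin_le_nhds
    simpa [Real.one_rpow] using h'
  have h3 : Tendsto (fun q : ℝ => (1 - q^(-2:ℝ))/(1 - q^(2*ν-2)))
      (nhdsWithin 1 (Set.Ioi 1)) (nhds (1/(1-ν))) := by
    have hnum := hslope (-2)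
    have hden := hslope (2*ν - 2)
    have hdiv : Tendsto (fun q : ℝ => ((q^(-2:ℝ) - 1)/(q-1)) / ((q^(2*ν-2) - 1)/(q-1)))
        (nhdsWithin 1 (Set.Ioi 1)) (nhds ((-2)/(2*ν-2))) :=
      hnum.div hden (by intro h; nlinarith)
    have heq : ∀ᶠ q in nhdsWithin (1:ℝ) (Set.Ioi 1),
        ((q^(-2:ℝ) - 1)/(q-1)) / ((q^(2*ν-2) - 1)/(q-1)) = (1 - q^(-2:ℝ))/(1 - q^(2*ν-2)) := by
      filter_upwards [self_mem_nhdsWithin] with q hq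
      have hq1 : q - 1 ≠ 0 := sub_ne_zero.mpr (ne_of_gt hq)
      have hne : 1 - q^(2*ν-2) ≠ 0 := by
        have : q^(2*ν-2) < 1 := Real.rpow_lt_one_of_one_lt_of_neg hq (by linarith)
        intro h; nlinarith
      have hne2 : q^(2*ν-2) - 1 ≠ 0 := by intro h; apply hne; linarith [sub_eq_zero.mp h]
      rw [div_div_div_cancel_right₀ hq1, ← neg_sub 1 (q^(-2:ℝ)), ← neg_sub 1 (q^(2*ν-2)),
        neg_div_neg_eq]
    have hval : ((-2):ℝ)/(2*ν-2) = 1/(1-ν) := by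
      rw [div_eq_div_iff (by nlinarith) (by linarith)]; ring
    rw [← hval]
    exact Filter.Tendsto.congr' heq hdiv
  have := h1.add (h2.mul h3)
  simp only [one_mul] at this
  exact this

lemma ML {X : Type*} [NormedAddCommGroup X] [InnerProductSpace ℝ X]
    (E : ℝ → X →L[ℝ] X)
    (hEsa : ∀ t : ℝ, ∀ u v : X, ⟪E t u, v⟫ = ⟪u, E t v⟫)
    (hEcomp : ∀ s t : ℝ, ∀ u : X, E s (E t u) = E (min s t) u)
    (T : ℝ) (hT : 0 < T) (hET : ∀ u : X, E T u = u)
    (xdag : X)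
    (φ : ℝ → ℝ) (hφmono : MonotoneOn φ (Set.Ici 0))
    (hφcont : ContinuousOn φ (Set.Ici 0)) (hφnn : ∀ t ∈ Set.Ici (0:ℝ), 0 ≤ φ t)
    (Aφ : X →L[ℝ] X)
    (hAcomm : ∀ t : ℝ, ∀ u : X, Aφ (E t u) = E t (Aφ u))
    (hAlb : ∀ s t : ℝ, 0 ≤ s → s ≤ t → ∀ x : X,
      φ s * ‖E t x - E s x‖ ≤ ‖Aφ (E t x - E s x)‖)
    (ν C : ℝ) (hν0 : 0 < ν) (hν1 : ν < 1) (hC : 0 < C)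
    (hdecay : ∀ t > (0:ℝ), ‖E t xdag‖ ^ 2 ≤ C * φ t ^ (2 * ν))
    (q : ℝ) (hq : 1 < q) (t₀ : ℝ) (ht₀ : t₀ ∈ Set.Icc 0 T) (hb : 0 < φ t₀) (x : X) :
    ⟪xdag, x⟫ ≤ ⟪E t₀ xdag, x⟫ +
      Real.sqrt (C * Gfun ν q) * φ t₀ ^ (ν - 1) * ‖Aφ x‖ := by
  obtain ⟨ht₀0, ht₀T⟩ := ht₀
  have hq0 : (0:ℝ) < q := lt_trans one_pos hq
  set b := φ t₀ with hbdef
  set ψ : ℕ → ℝ := fun i => b * q ^ i with hψdef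
  have hψ0 : ψ 0 = b := by simp [hψdef]
  have hψpos : ∀ i, 0 < ψ i := fun i => mul_pos hb (pow_pos hq0 i)
  have hψsucc : ∀ i, ψ (i+1) = q * ψ i := fun i => by simp [hψdef, pow_succ]; ring
  have hψmono : ∀ i j, i ≤ j → ψ i ≤ ψ j := fun i j h =>
    mul_le_mul_of_nonneg_left (pow_le_pow_right₀ hq.le h) hb.le
  have hψlt : ∀ i, ψ i < ψ (i+1) := fun i => by
    rw [hψsucc]; nlinarith [hψpos i]
  -- choice of n and m
  obtain ⟨n, hn, hnmin⟩ : ∃ n : ℕ, φ T ≤ ψ n ∧ ∀ k < n, ¬ (φ T ≤ ψ k) := by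
    have hex : ∃ n : ℕ, φ T ≤ ψ n := by
      obtain ⟨n, hn⟩ := pow_unbounded_of_one_lt (φ T / b) hq
      refine ⟨n, ?_⟩
      rw [div_lt_iff₀ hb] at hn
      simp only [hψdef]
      nlinarith
    exact ⟨Nat.find hex, Nat.find_spec hex, fun k hk => Nat.find_min hex hk⟩
  set m := max n 1 with hmdef
  have hm1 : 1 ≤ m := le_max_right _ _
  have hψm : φ T ≤ ψ m := le_trans hn (hψmono n m (le_max_left _ _))
  have hlt : ∀ i, 1 ≤ i → i < m → ψ i < φ T := by
    intro i h1 him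
    have hin : i < n := by
      rcases Nat.lt_or_ge i n with h | h
      · exact h
      · exfalso; have : m ≤ i := max_le h h1; omega
    exact lt_of_not_ge (hnmin i hin)
  have hφ0b : φ 0 ≤ b := hφmono (Set.mem_Ici.mpr le_rfl) (Set.mem_Ici.mpr ht₀0) ht₀0
  -- partition points
  have hpt : ∀ i : ℕ, ∃ s, s ∈ Set.Icc 0 T ∧ (1 ≤ i → i < m → φ s = ψ i) := by
    intro i
    by_cases hcase : 1 ≤ i ∧ i < m
    · obtain ⟨h1, him⟩ := hcase
      have hmem : ψ i ∈ Set.Icc (φ 0) (φ T) := by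
        constructor
        · calc φ 0 ≤ b := hφ0b
          _ = ψ 0 := hψ0.symm
          _ ≤ ψ i := hψmono 0 i (Nat.zero_le i)
        · exact (hlt i h1 him).le
      obtain ⟨s, hs, hφs⟩ := intermediate_value_Icc hT.le
        (hφcont.mono (fun z hz => hz.1)) hmem
      exact ⟨s, hs, fun _ _ => hφs⟩
    · exact ⟨T, ⟨hT.le, le_rfl⟩, fun h1 h2 => absurd ⟨h1, h2⟩ hcase⟩
  choose pt hptmem hptval using hpt
  set u : ℕ → ℝ := fun i => if i = 0 then t₀ else if i < m then pt i else T with hudef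
  have hu0 : u 0 = t₀ := by simp [hudef]
  have humem : ∀ i, u i ∈ Set.Icc 0 T := by
    intro i
    by_cases h0 : i = 0
    · simp [hudef, h0]; exact ⟨ht₀0, ht₀T⟩
    · by_cases hm' : i < m
      · simp [hudef, h0, hm']; exact ⟨(hptmem i).1, (hptmem i).2⟩
      · simp [hudef, h0, hm']; exact hT.le
  have huφ : ∀ i, i < m → φ (u i) = ψ i := by
    intro i him
    by_cases h0 : i = 0
    · subst h0; rw [hu0, hψ0]
    · have h1 : 1 ≤ i := Nat.one_le_iff_ne_zero.mpr h0
      simp only [hudef, h0, him, if_false, if_true]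
      exact hptval i h1 him
  have huT : ∀ i, m ≤ i → u i = T := by
    intro i hmi
    have h0 : i ≠ 0 := by omega
    have h2 : ¬ i < m := by omega
    simp [hudef, h0, h2]
  have humono : ∀ i, u i ≤ u (i+1) := by
    intro i
    rcases Nat.lt_or_ge (i+1) m with h | h
    · have hi : i < m := by omega
      have hφlt : φ (u i) < φ (u (i+1)) := by
        rw [huφ i hi, huφ _ h]; exact hψlt i
      by_contra hle
      push_neg at hle
      have := hφmono (Set.mem_Ici.mpr (humem (i+1)).1) (Set.mem_Ici.mpr (humem i).1) hle.le
      linarith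
    · rw [huT (i+1) h]; exact (humem i).2
  have hupos : ∀ i, 1 ≤ i → 0 < u i := by
    intro i h1
    rcases Nat.lt_or_ge i m with h | h
    · have hφu : φ (u i) = ψ i := huφ i h
      have hbi : b < ψ i := by
        calc b = ψ 0 := hψ0.symm
        _ < ψ 1 := hψlt 0
        _ ≤ ψ i := hψmono 1 i h1
      rcases ((humem i).1).lt_or_eq with h' | h'
      · exact h'
      · exfalso
        rw [← h'] at hφu
        linarith
    · rw [huT i h]; exact hT
  have hP := fun (i : ℕ) => Pfacts E hEsa hEcomp (u i) (u (i+1)) (humono i)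
  -- telescoping decomposition
  have hsum1 : ⟪xdag, x⟫ - ⟪E t₀ xdag, x⟫ =
      ∑ i ∈ Finset.range m, ⟪E (u (i+1)) xdag - E (u i) xdag, x⟫ := by
    have hterm : ∀ i, ⟪E (u (i+1)) xdag - E (u i) xdag, x⟫ =
        ⟪E (u (i+1)) xdag, x⟫ - ⟪E (u i) xdag, x⟫ := fun i => inner_sub_left _ _ _
    rw [Finset.sum_congr rfl (fun i _ => hterm i),
      Finset.sum_range_sub (fun i => ⟪E (u i) xdag, x⟫) m, huT m le_rfl, hET, hu0]
  set f : ℕ → ℝ := fun i => ‖E (u (i+1)) xdag - E (u i) xdag‖ / ψ i with hfdef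
  set g : ℕ → ℝ := fun i => ‖E (u (i+1)) (Aφ x) - E (u i) (Aφ x)‖ with hgdef
  have htermle : ∀ i ∈ Finset.range m, ⟪E (u (i+1)) xdag - E (u i) xdag, x⟫ ≤ f i * g i := by
    intro i hi
    rw [Finset.mem_range] at hi
    have h1 : ⟪E (u (i+1)) xdag - E (u i) xdag, x⟫ =
        ⟪E (u (i+1)) xdag - E (u i) xdag, E (u (i+1)) x - E (u i) x⟫ := (hP i).1 xdag x
    have h2 := real_inner_le_norm (E (u (i+1)) xdag - E (u i) xdag) (E (u (i+1)) x - E (u i) x)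
    have h3 : ψ i * ‖E (u (i+1)) x - E (u i) x‖ ≤ g i := by
      have halb := hAlb (u i) (u (i+1)) (humem i).1 (humono i) x
      rw [huφ i hi] at halb
      calc ψ i * ‖E (u (i+1)) x - E (u i) x‖ ≤ ‖Aφ (E (u (i+1)) x - E (u i) x)‖ := halb
      _ = g i := by rw [map_sub, hAcomm, hAcomm]
    have h4 : ‖E (u (i+1)) x - E (u i) x‖ ≤ g i / ψ i :=
      (le_div_iff₀ (hψpos i)).mpr (by linarith [h3])
    calc ⟪E (u (i+1)) xdag - E (u i) xdag, x⟫
        ≤ ‖E (u (i+1)) xdag - E (u i) xdag‖ * ‖E (u (i+1)) x - E (u i) x‖ := by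
          rw [h1]; exact h2
    _ ≤ ‖E (u (i+1)) xdag - E (u i) xdag‖ * (g i / ψ i) :=
          mul_le_mul_of_nonneg_left h4 (norm_nonneg _)
    _ = f i * g i := by rw [hfdef]; ring
  -- Cauchy-Schwarz
  have hfg : ∑ i ∈ Finset.range m, f i * g i ≤
      Real.sqrt (∑ i ∈ Finset.range m, f i^2) * Real.sqrt (∑ i ∈ Finset.range m, g i^2) := by
    have h := Finset.sum_mul_sq_le_sq_mul_sq (Finset.range m) f g
    calc ∑ i ∈ Finset.range m, f i * g i ≤ |∑ i ∈ Finset.range m, f i * g i| := le_abs_self _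
    _ = Real.sqrt ((∑ i ∈ Finset.range m, f i * g i)^2) := (Real.sqrt_sq_eq_abs _).symm
    _ ≤ Real.sqrt ((∑ i ∈ Finset.range m, f i^2) * (∑ i ∈ Finset.range m, g i^2)) :=
        Real.sqrt_le_sqrt h
    _ = _ := Real.sqrt_mul (Finset.sum_nonneg fun i _ => sq_nonneg _) _
  -- sum of g² bound
  have hgsum : ∑ i ∈ Finset.range m, g i ^ 2 ≤ ‖Aφ x‖^2 := by
    have hgi : ∀ i, g i ^ 2 = ⟪E (u (i+1)) (Aφ x), Aφ x⟫ - ⟪E (u i) (Aφ x), Aφ x⟫ := by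
      intro i
      have : (g i : ℝ) ^ 2 = ⟪E (u (i+1)) (Aφ x) - E (u i) (Aφ x),
          E (u (i+1)) (Aφ x) - E (u i) (Aφ x)⟫ := (real_inner_self_eq_norm_sq _).symm
      rw [this, ← (hP i).1 (Aφ x) (Aφ x), inner_sub_left]
    rw [Finset.sum_congr rfl (fun i _ => hgi i),
      Finset.sum_range_sub (fun i => ⟪E (u i) (Aφ x), Aφ x⟫) m, huT m le_rfl, hET, hu0]
    have hQ := Pfacts E hEsa hEcomp t₀ T ht₀T
    have h1 : ⟪Aφ x, Aφ x⟫ - ⟪E t₀ (Aφ x), Aφ x⟫ = ⟪E T (Aφ x) - E t₀ (Aφ x), Aφ x⟫ := by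
      rw [inner_sub_left, hET]
    have h2 := real_inner_le_norm (E T (Aφ x) - E t₀ (Aφ x)) (Aφ x)
    have h3 := hQ.2 (Aφ x)
    have h4 := norm_nonneg (Aφ x)
    rw [h1]
    nlinarith
  -- sum of f² bound
  set ee : ℕ → ℝ := fun i => ‖E (u i) xdag‖^2 with heedef
  set W : ℕ → ℝ := fun i => ((ψ i)^2)⁻¹ with hWdef
  have heei : ∀ i, ‖E (u i) xdag‖^2 = ee i := by intro i; simp only [heedef]
  have hWi : ∀ i, W i = ((ψ i)^2)⁻¹ := by intro i; simp only [hWdef]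
  have hsqE : ∀ t : ℝ, ⟪E t xdag, xdag⟫ = ‖E t xdag‖^2 := by
    intro t
    calc ⟪E t xdag, xdag⟫ = ⟪E t (E t xdag), xdag⟫ := by rw [hEcomp, min_self]
    _ = ⟪E t xdag, E t xdag⟫ := hEsa t (E t xdag) xdag
    _ = ‖E t xdag‖^2 := real_inner_self_eq_norm_sq _
  have hfsq : ∀ i, f i ^ 2 = (ee (i+1) - ee i) * W i := by
    intro i
    have h1 : ‖E (u (i+1)) xdag - E (u i) xdag‖^2 = ee (i+1) - ee i := by
      calc ‖E (u (i+1)) xdag - E (u i) xdag‖^2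
          = ⟪E (u (i+1)) xdag - E (u i) xdag, E (u (i+1)) xdag - E (u i) xdag⟫ :=
            (real_inner_self_eq_norm_sq _).symm
      _ = ⟪E (u (i+1)) xdag - E (u i) xdag, xdag⟫ := ((hP i).1 xdag xdag).symm
      _ = ⟪E (u (i+1)) xdag, xdag⟫ - ⟪E (u i) xdag, xdag⟫ := inner_sub_left _ _ _
      _ = ee (i+1) - ee i := by rw [hsqE, hsqE, heei, heei]
    have : f i ^ 2 = ‖E (u (i+1)) xdag - E (u i) xdag‖^2 * ((ψ i)^2)⁻¹ := by
      simp only [hfdef]; rw [div_pow, div_eq_mul_inv]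
    rw [this, h1, hWi]
  have hW0 : 0 ≤ W 0 := by rw [hWi]; positivity
  have hee0 : 0 ≤ ee 0 := by rw [← heei]; positivity
  have habel := abel_le ee W m hm1 hee0 hW0
  -- geometric data
  set H : ℕ → ℝ := fun i => (ψ i) ^ (2*ν - 2 : ℝ) with hHdef
  have hHi : ∀ i, H i = (ψ i) ^ (2*ν - 2 : ℝ) := by intro i; simp only [hHdef]
  have hHpos : ∀ i, 0 < H i := fun i => by rw [hHi]; exact Real.rpow_pos_of_pos (hψpos i) _
  have hqp : q ^ (2*ν - 2 : ℝ) < 1 := Real.rpow_lt_one_of_one_lt_of_neg hq (by linarith)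
  have hqppos : (0:ℝ) < q ^ (2*ν-2:ℝ) := Real.rpow_pos_of_pos hq0 _
  have hden : (0:ℝ) < 1 - q^(2*ν-2:ℝ) := by linarith
  have hq2le : q ^ (-2:ℝ) ≤ 1 := Real.rpow_le_one_of_one_le_of_nonpos hq.le (by norm_num)
  have hnum : (0:ℝ) ≤ 1 - q^(-2:ℝ) := by linarith
  set K : ℝ := q^(2*ν:ℝ) * ((1 - q^(-2:ℝ))/(1 - q^(2*ν-2:ℝ))) with hKdef
  have hKnn : 0 ≤ K := by
    rw [hKdef]
    exact mul_nonneg (Real.rpow_nonneg hq0.le _) (div_nonneg hnum hden.le)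
  have hq2 : q ^ (-2:ℝ) = ((q^(2:ℕ)):ℝ)⁻¹ := by
    rw [show (-2:ℝ) = -((2:ℕ):ℝ) by norm_num, Real.rpow_neg hq0.le, Real.rpow_natCast]
  have hWdiff : ∀ i, W i - W (i+1) = (1 - q^(-2:ℝ)) * ((ψ i)^2)⁻¹ := by
    intro i
    rw [hWi, hWi, hψsucc i, hq2]
    have h1 : (q * ψ i)^2 = q^2 * (ψ i)^2 := by ring
    rw [h1, mul_inv]
    have hq2n : ((q:ℝ)^2)⁻¹ ≥ 0 := by positivity
    ring
  have hψrpow : ∀ i, (ψ i)^(2*ν:ℝ) * ((ψ i)^2)⁻¹ = H i := by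
    intro i
    have h1 : (((ψ i)^(2:ℕ)):ℝ)⁻¹ = (ψ i) ^ (-2:ℝ) := by
      rw [show (-2:ℝ) = -((2:ℕ):ℝ) by norm_num, Real.rpow_neg (hψpos i).le, Real.rpow_natCast]
    rw [h1, ← Real.rpow_add (hψpos i), hHi, show 2*ν + -2 = 2*ν - 2 by ring]
  have hψ2ν : ∀ i, (ψ (i+1))^(2*ν:ℝ) = q^(2*ν:ℝ) * (ψ i)^(2*ν:ℝ) := by
    intro i; rw [hψsucc, Real.mul_rpow hq0.le (hψpos i).le]
  have hHsucc : ∀ i, H (i+1) = q^(2*ν-2:ℝ) * H i := by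
    intro i; rw [hHi, hHi, hψsucc i, Real.mul_rpow hq0.le (hψpos i).le]
  have hkey : ∀ i, C * (ψ (i+1))^(2*ν:ℝ) * (W i - W (i+1)) = (C * K) * (H i - H (i+1)) := by
    intro i
    rw [hWdiff i, hψ2ν i, hHsucc i]
    have h2 : K * (1 - q^(2*ν-2:ℝ)) = q^(2*ν:ℝ) * (1 - q^(-2:ℝ)) := by
      rw [hKdef, mul_assoc, div_mul_cancel₀ _ hden.ne']
    calc C * (q^(2*ν:ℝ) * (ψ i)^(2*ν:ℝ)) * ((1 - q^(-2:ℝ)) * ((ψ i)^2)⁻¹)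
        = C * (q^(2*ν:ℝ) * (1 - q^(-2:ℝ))) * ((ψ i)^(2*ν:ℝ) * ((ψ i)^2)⁻¹) := by ring
    _ = C * (K * (1 - q^(2*ν-2:ℝ))) * H i := by rw [hψrpow i, h2]
    _ = (C * K) * (H i - q^(2*ν-2:ℝ) * H i) := by ring
  have hterm2 : ∀ i ∈ Finset.range (m-1),
      ee (i+1) * (W i - W (i+1)) ≤ (C*K) * (H i - H (i+1)) := by
    intro i hi
    rw [Finset.mem_range] at hi
    have hi1 : i + 1 < m := by omega
    have hu1 : 0 < u (i+1) := hupos (i+1) (by omega)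
    have hd := hdecay (u (i+1)) hu1
    rw [huφ (i+1) hi1, heei] at hd
    have hWd : 0 ≤ W i - W (i+1) := by rw [hWdiff i]; positivity
    calc ee (i+1) * (W i - W (i+1)) ≤ (C * (ψ (i+1))^(2*ν:ℝ)) * (W i - W (i+1)) :=
        mul_le_mul_of_nonneg_right hd hWd
    _ = (C*K) * (H i - H (i+1)) := by rw [← hkey i]
  have hsum2 : ∑ i ∈ Finset.range (m-1), ee (i+1) * (W i - W (i+1)) ≤ (C*K) * H 0 := by
    calc ∑ i ∈ Finset.range (m-1), ee (i+1) * (W i - W (i+1))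
        ≤ ∑ i ∈ Finset.range (m-1), (C*K)*(H i - H (i+1)) := Finset.sum_le_sum hterm2
    _ = (C*K) * (H 0 - H (m-1)) := by rw [← Finset.mul_sum, Finset.sum_range_sub' H (m-1)]
    _ ≤ (C*K) * H 0 :=
        mul_le_mul_of_nonneg_left (by linarith [hHpos (m-1)]) (mul_nonneg hC.le hKnn)
  have hlast : ee m * W (m-1) ≤ C * q^(2:ℝ) * H 0 := by
    have humT : u m = T := huT m le_rfl
    have heem : ee m ≤ C * (φ T)^(2*ν) := by
      rw [← heei, humT]; exact hdecay T hT
    have hφT2 : (φ T)^(2*ν:ℝ) ≤ (ψ m)^(2*ν:ℝ) :=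
      Real.rpow_le_rpow (hφnn T hT.le) hψm (by linarith)
    have hmm : m = (m-1) + 1 := (Nat.succ_pred_eq_of_pos hm1).symm
    have hψmval : ψ m = q * ψ (m-1) := by
      conv_lhs => rw [hmm]
      exact hψsucc (m-1)
    have hWnn : 0 ≤ W (m-1) := by rw [hWi]; positivity
    have hcalc : (ψ m)^(2*ν:ℝ) * W (m-1) = q^(2*ν:ℝ) * H (m-1) := by
      rw [hψmval, Real.mul_rpow hq0.le (hψpos _).le, hWi, mul_assoc, hψrpow (m-1)]
    have hH0 : H (m-1) ≤ H 0 := by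
      rw [hHi, hHi]
      exact Real.rpow_le_rpow_of_nonpos (hψpos 0) (hψmono 0 (m-1) (Nat.zero_le _)) (by linarith)
    have hq2ν2 : q^(2*ν:ℝ) ≤ q^(2:ℝ) := Real.rpow_le_rpow_of_exponent_le hq.le (by linarith)
    calc ee m * W (m-1) ≤ (C * (φ T)^(2*ν)) * W (m-1) :=
        mul_le_mul_of_nonneg_right heem hWnn
    _ ≤ (C * (ψ m)^(2*ν:ℝ)) * W (m-1) :=
        mul_le_mul_of_nonneg_right (mul_le_mul_of_nonneg_left hφT2 hC.le) hWnn
    _ = C * (q^(2*ν:ℝ) * H (m-1)) := by rw [mul_assoc, hcalc]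
    _ ≤ C * (q^(2:ℝ) * H 0) :=
        mul_le_mul_of_nonneg_left
          (mul_le_mul hq2ν2 hH0 (hHpos (m-1)).le (Real.rpow_nonneg hq0.le _)) hC.le
    _ = C * q^(2:ℝ) * H 0 := by ring
  have hH0b : H 0 = b ^ (2*ν - 2:ℝ) := by rw [hHi, hψ0]
  have hfsum : ∑ i ∈ Finset.range m, f i^2 ≤ C * Gfun ν q * b^(2*ν-2:ℝ) := by
    calc ∑ i ∈ Finset.range m, f i^2
        = ∑ i ∈ Finset.range m, (ee (i+1) - ee i) * W i :=
          Finset.sum_congr rfl (fun i _ => hfsq i)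
    _ ≤ ee m * W (m-1) + ∑ i ∈ Finset.range (m-1), ee (i+1) * (W i - W (i+1)) := habel
    _ ≤ C * q^(2:ℝ) * H 0 + (C*K) * H 0 := add_le_add hlast hsum2
    _ = C * Gfun ν q * b^(2*ν-2:ℝ) := by rw [hH0b]; simp only [Gfun, hKdef]; ring
  have hGnn : 0 ≤ C * Gfun ν q := by
    have h1 : 0 ≤ Gfun ν q := by
      have : 0 ≤ q ^ (2:ℝ) := Real.rpow_nonneg hq0.le _
      have h2 : 0 ≤ q ^ (2*ν:ℝ) * ((1 - q^(-2:ℝ))/(1 - q^(2*ν-2:ℝ))) :=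
        mul_nonneg (Real.rpow_nonneg hq0.le _) (div_nonneg hnum hden.le)
      simp only [Gfun]; linarith
    exact mul_nonneg hC.le h1
  have hsf : Real.sqrt (∑ i ∈ Finset.range m, f i^2) ≤ Real.sqrt (C * Gfun ν q) * b^(ν-1:ℝ) := by
    have h1 : Real.sqrt (∑ i ∈ Finset.range m, f i^2)
        ≤ Real.sqrt (C * Gfun ν q * b^(2*ν-2:ℝ)) := Real.sqrt_le_sqrt hfsum
    rw [Real.sqrt_mul hGnn] at h1
    have h2 : Real.sqrt (b^(2*ν-2:ℝ)) = b^(ν-1:ℝ) := by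
      rw [Real.sqrt_eq_rpow, ← Real.rpow_mul hb.le, show (2*ν-2)*((1:ℝ)/2) = ν - 1 by ring]
    rwa [h2] at h1
  have hsg : Real.sqrt (∑ i ∈ Finset.range m, g i^2) ≤ ‖Aφ x‖ := by
    have h := Real.sqrt_le_sqrt hgsum
    rwa [Real.sqrt_sq (norm_nonneg _)] at h
  have hfinal : ⟪xdag, x⟫ - ⟪E t₀ xdag, x⟫ ≤
      Real.sqrt (C * Gfun ν q) * b^(ν-1:ℝ) * ‖Aφ x‖ := by
    rw [hsum1]
    calc ∑ i ∈ Finset.range m, ⟪E (u (i+1)) xdag - E (u i) xdag, x⟫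
        ≤ ∑ i ∈ Finset.range m, f i * g i := Finset.sum_le_sum htermle
    _ ≤ Real.sqrt (∑ i ∈ Finset.range m, f i^2) * Real.sqrt (∑ i ∈ Finset.range m, g i^2) := hfg
    _ ≤ (Real.sqrt (C * Gfun ν q) * b^(ν-1:ℝ)) * ‖Aφ x‖ := by
        apply mul_le_mul hsf hsg (Real.sqrt_nonneg _)
        positivity
  linarith

set_option maxHeartbeats 1000000 in
theorem statement14
    {X : Type*} [NormedAddCommGroup X] [InnerProductSpace ℝ X] [CompleteSpace X]
    {Y : Type*} [NormedAddCommGroup Y] [InnerProductSpace ℝ Y] [CompleteSpace Y]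
    (L : X →L[ℝ] Y) (y : Y) (xdag : X)
    (hsol : L xdag = y) (hmin : ∀ x : X, L x = y → ‖xdag‖ ≤ ‖x‖)
    (E : ℝ → X →L[ℝ] X)
    (hEsa : ∀ t : ℝ, ∀ u v : X, ⟪E t u, v⟫ = ⟪u, E t v⟫)
    (hEcomp : ∀ s t : ℝ, ∀ u : X, E s (E t u) = E (min s t) u)
    (hEtop : ∀ t : ℝ, ‖L‖ ^ 2 ≤ t → ∀ u : X, E t u = u)
    (hE0dag : E 0 xdag = 0)
    (hEr : ∀ u : X, ∀ t : ℝ, Tendsto (fun s => E s u) (nhdsWithin t (Set.Ioi t)) (nhds (E t u)))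
    (φ : ℝ → ℝ) (hφmono : MonotoneOn φ (Set.Ici 0))
    (hφcont : ContinuousOn φ (Set.Ici 0)) (hφnn : ∀ t ∈ Set.Ici (0:ℝ), 0 ≤ φ t)
    (Aφ : X →L[ℝ] X)
    (hAcomm : ∀ t : ℝ, ∀ u : X, Aφ (E t u) = E t (Aφ u))
    (hAub : ∀ s t : ℝ, 0 ≤ s → s ≤ t → ∀ x : X,
      ‖Aφ (E t x - E s x)‖ ≤ φ t * ‖E t x - E s x‖)
    (hAlb : ∀ s t : ℝ, 0 ≤ s → s ≤ t → ∀ x : X,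
      φ s * ‖E t x - E s x‖ ≤ ‖Aφ (E t x - E s x)‖)
    (ν : ℝ) (hν : ν ∈ Set.Ioo (0:ℝ) 1)
    (C : ℝ) (hC : 0 < C)
    (hdecay : ∀ t > (0:ℝ), ‖E t xdag‖ ^ 2 ≤ C * φ t ^ (2 * ν)) :
    ∀ x : X, ⟪xdag, x⟫ ≤
      2 * C ^ ((1 - ν) / 2) * (C * (1 + 1 / (1 - ν))) ^ (ν / 2) * ‖Aφ x‖ ^ ν * ‖x‖ ^ (1 - ν) := by
  intro x
  obtain ⟨hν0, hν1⟩ := hν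
  have h1ν : (0:ℝ) < 1 - ν := by linarith
  set T : ℝ := ‖L‖^2 with hTdef
  have hT0 : 0 ≤ T := sq_nonneg _
  have hET : ∀ u : X, E T u = u := hEtop T le_rfl
  have hγ : (0:ℝ) < 1 + 1/(1-ν) := by positivity
  set c : ℝ := Real.sqrt (C * (1 + 1/(1-ν))) with hcdef
  have hc : 0 < c := Real.sqrt_pos.mpr (by positivity)
  set D : ℝ := C ^ ((1 - ν)/2) * (C * (1+1/(1-ν))) ^ (ν/2) * ‖Aφ x‖ ^ ν * ‖x‖ ^ (1 - ν)
    with hDdef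
  have hDnn : 0 ≤ D := by positivity
  suffices h : ⟪xdag, x⟫ ≤ 2 * D by
    calc ⟪xdag, x⟫ ≤ 2 * D := h
    _ = 2 * C ^ ((1 - ν) / 2) * (C * (1 + 1 / (1 - ν))) ^ (ν / 2) * ‖Aφ x‖ ^ ν
        * ‖x‖ ^ (1 - ν) := by rw [hDdef]; ring
  -- trivial case: xdag = 0
  have hzero : xdag = 0 → ⟪xdag, x⟫ ≤ 2 * D := by
    intro h; rw [h, inner_zero_left]; linarith
  rcases hT0.lt_or_eq with hT | hT
  swap
  · -- T = 0
    apply hzero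
    have h0 := hEtop 0 hT.symm.le
    rw [← h0 xdag, hE0dag]
  rcases (hφnn T hT.le).lt_or_eq with hφT | hφT
  swap
  · -- φ T = 0
    apply hzero
    have hd := hdecay T hT
    rw [← hφT, Real.zero_rpow (by positivity), mul_zero, hET] at hd
    have := norm_nonneg xdag
    have hn : ‖xdag‖ = 0 := by nlinarith
    exact norm_eq_zero.mp hn
  by_cases hwz : Aφ x = 0
  · -- degenerate: Aφ x = 0; show inner ≤ 0
    suffices h : ⟪xdag, x⟫ ≤ 0 by linarith
    have key : ∀ s, 0 ≤ s → s ≤ T → 0 < φ s → ⟪xdag, x⟫ = ⟪E s xdag, x⟫ := by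
      intro s hs0 hsT hφs
      have hPf := Pfacts E hEsa hEcomp s T hsT
      have hPx : E T x - E s x = 0 := by
        have h1 := hAlb s T hs0 hsT x
        rw [map_sub, hAcomm, hAcomm, hwz, map_zero, map_zero, sub_zero, norm_zero] at h1
        have h2 := norm_nonneg (E T x - E s x)
        have h3 : ‖E T x - E s x‖ = 0 := by nlinarith
        exact norm_eq_zero.mp h3
      have h4 : ⟪xdag, x⟫ - ⟪E s xdag, x⟫ = ⟪E T xdag - E s xdag, x⟫ := by
        rw [inner_sub_left, hET]
      have h5 : ⟪E T xdag - E s xdag, x⟫ = ⟪E T xdag - E s xdag, E T x - E s x⟫ := hPf.1 _ _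
      rw [hPx, inner_zero_right] at h5
      linarith
    rcases (hφnn 0 Set.self_mem_Ici).lt_or_eq with hφ0 | hφ0
    · have h := key 0 le_rfl hT.le hφ0
      rw [h, hE0dag, inner_zero_left]
    · -- φ 0 = 0
      apply le_of_forall_pos_le_add
      intro ε hε
      have hA1 : (0:ℝ) < Real.sqrt C * ‖x‖ + 1 := by positivity
      set δ : ℝ := min (φ T / 2) ((ε / (Real.sqrt C * ‖x‖ + 1)) ^ ((1:ℝ)/ν)) with hδdef
      have hδ0 : 0 < δ := by
        apply lt_min (by linarith)
        positivity
      have hδT : δ ≤ φ T := le_trans (min_le_left _ _) (by linarith)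
      obtain ⟨s, hsmem, hφs⟩ : ∃ s ∈ Set.Icc 0 T, φ s = δ := by
        have hmem : δ ∈ Set.Icc (φ 0) (φ T) := ⟨by rw [← hφ0]; exact hδ0.le, hδT⟩
        obtain ⟨s, hs, hφs⟩ := intermediate_value_Icc hT.le
          (hφcont.mono (fun z hz => hz.1)) hmem
        exact ⟨s, hs, hφs⟩
      have hs0 : 0 < s := by
        rcases hsmem.1.lt_or_eq with h | h
        · exact h
        · exfalso; rw [← h, ← hφ0] at hφs; linarith
      have hkey := key s hsmem.1 hsmem.2 (by rw [hφs]; exact hδ0)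
      rw [hkey]
      have hb1 : ⟪E s xdag, x⟫ ≤ ‖E s xdag‖ * ‖x‖ := real_inner_le_norm _ _
      have hd := hdecay s hs0
      rw [hφs] at hd
      have hb2 : ‖E s xdag‖ ≤ Real.sqrt C * δ ^ (ν:ℝ) := by
        have h1 : ‖E s xdag‖ ≤ Real.sqrt (C * δ ^ (2*ν)) := by
          have h2 := Real.sqrt_le_sqrt hd
          rwa [Real.sqrt_sq (norm_nonneg _)] at h2
        have h2 : Real.sqrt (C * δ ^ (2*ν)) = Real.sqrt C * δ ^ (ν:ℝ) := by
          rw [Real.sqrt_mul hC.le, show (2*ν) = ν + ν by ring, Real.rpow_add hδ0, ← sq,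
            Real.sqrt_sq (Real.rpow_nonneg hδ0.le _)]
        rwa [h2] at h1
      have h3 : δ ^ (ν:ℝ) ≤ ε / (Real.sqrt C * ‖x‖ + 1) := by
        have hδle : δ ≤ (ε / (Real.sqrt C * ‖x‖ + 1)) ^ ((1:ℝ)/ν) := min_le_right _ _
        have h4 := Real.rpow_le_rpow hδ0.le hδle hν0.le
        rwa [← Real.rpow_mul (by positivity), one_div_mul_cancel hν0.ne', Real.rpow_one] at h4
      have h4 : Real.sqrt C * δ ^ (ν:ℝ) * ‖x‖ ≤ ε := by
        have hA : 0 ≤ Real.sqrt C * ‖x‖ := by positivity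
        have h5 : Real.sqrt C * δ ^ (ν:ℝ) * ‖x‖ = δ ^ (ν:ℝ) * (Real.sqrt C * ‖x‖) := by ring
        rw [h5]
        calc δ ^ (ν:ℝ) * (Real.sqrt C * ‖x‖)
            ≤ (ε / (Real.sqrt C * ‖x‖ + 1)) * (Real.sqrt C * ‖x‖) :=
              mul_le_mul_of_nonneg_right h3 hA
        _ ≤ ε := by rw [div_mul_eq_mul_div, div_le_iff₀ hA1]; nlinarith
      have h6 : ‖E s xdag‖ * ‖x‖ ≤ Real.sqrt C * δ ^ (ν:ℝ) * ‖x‖ :=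
        mul_le_mul_of_nonneg_right hb2 (norm_nonneg x)
      linarith
  · -- main case : Aφ x ≠ 0
    have hw : 0 < ‖Aφ x‖ := norm_pos_iff.mpr hwz
    have hx : 0 < ‖x‖ :=
      norm_pos_iff.mpr (fun h => hwz (by rw [h, map_zero]))
    have hsC : 0 < Real.sqrt C := Real.sqrt_pos.mpr hC
    set a : ℝ := c * ‖Aφ x‖ / (Real.sqrt C * ‖x‖) with hadef
    have ha : 0 < a := by positivity
    have hD : 0 < D := by
      rw [hDdef]
      have := Real.rpow_pos_of_pos hC ((1-ν)/2)
      have := Real.rpow_pos_of_pos (show (0:ℝ) < C * (1+1/(1-ν)) by positivity) (ν/2)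
      have := Real.rpow_pos_of_pos hw ν
      have := Real.rpow_pos_of_pos hx (1-ν)
      positivity
    -- algebra : sqrt C * a^ν * ‖x‖ = D
    have hsqrtC : Real.sqrt C = C ^ ((1:ℝ)/2) := Real.sqrt_eq_rpow C
    have hcν : c ^ (ν:ℝ) = (C * (1+1/(1-ν))) ^ (ν/2 : ℝ) := by
      rw [hcdef, Real.sqrt_eq_rpow, ← Real.rpow_mul (by positivity),
        show (1:ℝ)/2*ν = ν/2 by ring]
    have hsCν : (Real.sqrt C) ^ (ν:ℝ) = C ^ (ν/2 : ℝ) := by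
      rw [Real.sqrt_eq_rpow, ← Real.rpow_mul hC.le, show (1:ℝ)/2*ν = ν/2 by ring]
    have hCsplit : C ^ ((1:ℝ)/2) = C ^ ((1-ν)/2 : ℝ) * C ^ (ν/2 : ℝ) := by
      rw [← Real.rpow_add hC, show (1-ν)/2 + ν/2 = (1:ℝ)/2 by ring]
    have hxsplit : ‖x‖ ^ (ν:ℝ) * ‖x‖ ^ (1-ν:ℝ) = ‖x‖ := by
      rw [← Real.rpow_add hx, show ν + (1-ν) = (1:ℝ) by ring, Real.rpow_one]
    have haν : a ^ (ν:ℝ) = c ^ (ν:ℝ) * ‖Aφ x‖ ^ (ν:ℝ) / ((Real.sqrt C) ^ (ν:ℝ) * ‖x‖ ^ (ν:ℝ)) := by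
      rw [hadef, Real.div_rpow (by positivity) (by positivity),
        Real.mul_rpow hc.le (norm_nonneg _), Real.mul_rpow hsC.le (norm_nonneg _)]
    have halg : ∀ P Q R S U V xx : ℝ, 0 < U → 0 < V → V * S = xx →
        (P*U) * (Q*R/(U*V)) * xx = P*Q*R*S := by
      intro P Q R S U V xx hU hV hVS
      rw [← hVS]; field_simp
    have hT1 : Real.sqrt C * a ^ (ν:ℝ) * ‖x‖ = D := by
      rw [hDdef, haν, hcν, hsCν, hsqrtC, hCsplit]
      exact halg _ _ _ _ _ _ _ (Real.rpow_pos_of_pos hC _) (Real.rpow_pos_of_pos hx _) hxsplit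
    -- ε-argument
    apply le_of_forall_pos_le_add
    intro ε hε
    have hεc : 0 < ε * c / D := by positivity
    obtain ⟨q, hq1, hqG⟩ : ∃ q : ℝ, 1 < q ∧ Real.sqrt (C * Gfun ν q) < c + ε * c / D := by
      have hlim : Tendsto (fun q : ℝ => Real.sqrt (C * Gfun ν q))
          (nhdsWithin 1 (Set.Ioi 1)) (nhds c) := by
        have h1 : Tendsto (fun q : ℝ => C * Gfun ν q) (nhdsWithin 1 (Set.Ioi 1))
            (nhds (C * (1 + 1/(1-ν)))) := tendsto_const_nhds.mul (Glim ν hν0 hν1)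
        have h2 := (Real.continuous_sqrt.continuousAt
          (x := C * (1 + 1/(1-ν)))).tendsto.comp h1
        rw [hcdef]
        exact h2
      have hev : ∀ᶠ q in nhdsWithin (1:ℝ) (Set.Ioi 1),
          Real.sqrt (C * Gfun ν q) < c + ε * c / D := by
        apply hlim.eventually_lt_const
        linarith
      obtain ⟨q, hqlt, hqmem⟩ := (hev.and self_mem_nhdsWithin).exists
      exact ⟨q, hqmem, hqlt⟩
    -- unified bound
    have hfirst : ∀ t₀ : ℝ, 0 < t₀ → φ t₀ = a → ⟪E t₀ xdag, x⟫ ≤ Real.sqrt C * a ^ (ν:ℝ) * ‖x‖ := by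
      intro t₀ ht₀pos hφt₀
      have hd := hdecay t₀ ht₀pos
      rw [hφt₀] at hd
      have h1 : ‖E t₀ xdag‖ ≤ Real.sqrt C * a ^ (ν:ℝ) := by
        have h2 := Real.sqrt_le_sqrt hd
        rw [Real.sqrt_sq (norm_nonneg _)] at h2
        rwa [Real.sqrt_mul hC.le, show (2*ν) = ν + ν by ring, Real.rpow_add ha, ← sq,
          Real.sqrt_sq (Real.rpow_nonneg ha.le _)] at h2
      calc ⟪E t₀ xdag, x⟫ ≤ ‖E t₀ xdag‖ * ‖x‖ := real_inner_le_norm _ _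
      _ ≤ Real.sqrt C * a ^ (ν:ℝ) * ‖x‖ := mul_le_mul_of_nonneg_right h1 (norm_nonneg x)
    have hbound : ⟪xdag, x⟫ ≤ Real.sqrt C * a ^ (ν:ℝ) * ‖x‖
        + Real.sqrt (C * Gfun ν q) * a ^ (ν-1:ℝ) * ‖Aφ x‖ := by
      have hsecnn : 0 ≤ Real.sqrt (C * Gfun ν q) * a ^ (ν-1:ℝ) * ‖Aφ x‖ := by positivity
      have hfstnn : 0 ≤ Real.sqrt C * a ^ (ν:ℝ) * ‖x‖ := by positivity
      rcases le_or_gt (φ T) a with hcase | hcase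
      · -- standalone : a ≥ φ T
        have hd := hdecay T hT
        have h1 : ‖E T xdag‖ ≤ Real.sqrt C * (φ T) ^ (ν:ℝ) := by
          have h2 := Real.sqrt_le_sqrt hd
          rw [Real.sqrt_sq (norm_nonneg _)] at h2
          rwa [Real.sqrt_mul hC.le, show (2*ν) = ν + ν by ring, Real.rpow_add hφT, ← sq,
            Real.sqrt_sq (Real.rpow_nonneg hφT.le _)] at h2
        have h3 : (φ T) ^ (ν:ℝ) ≤ a ^ (ν:ℝ) := Real.rpow_le_rpow hφT.le hcase hν0.le
        have h4 : ⟪xdag, x⟫ ≤ ‖E T xdag‖ * ‖x‖ := by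
          calc ⟪xdag, x⟫ = ⟪E T xdag, x⟫ := by rw [hET]
          _ ≤ ‖E T xdag‖ * ‖x‖ := real_inner_le_norm _ _
        have h5 : ‖E T xdag‖ * ‖x‖ ≤ Real.sqrt C * a ^ (ν:ℝ) * ‖x‖ := by
          apply mul_le_mul_of_nonneg_right _ (norm_nonneg x)
          calc ‖E T xdag‖ ≤ Real.sqrt C * (φ T) ^ (ν:ℝ) := h1
          _ ≤ Real.sqrt C * a ^ (ν:ℝ) := mul_le_mul_of_nonneg_left h3 (Real.sqrt_nonneg C)
        linarith
      · rcases le_or_gt a (φ 0) with hcase0 | hcase0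
        · -- ML at t₀ = 0
          have hb0 : 0 < φ 0 := lt_of_lt_of_le ha hcase0
          have h := ML E hEsa hEcomp T hT hET xdag φ hφmono hφcont hφnn Aφ hAcomm hAlb
            ν C hν0 hν1 hC hdecay q hq1 0 ⟨le_rfl, hT.le⟩ hb0 x
          rw [hE0dag, inner_zero_left] at h
          have h2 : (φ 0) ^ (ν-1:ℝ) ≤ a ^ (ν-1:ℝ) :=
            Real.rpow_le_rpow_of_nonpos ha hcase0 (by linarith)
          have h3 : Real.sqrt (C * Gfun ν q) * (φ 0) ^ (ν-1:ℝ) * ‖Aφ x‖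
              ≤ Real.sqrt (C * Gfun ν q) * a ^ (ν-1:ℝ) * ‖Aφ x‖ := by
            apply mul_le_mul_of_nonneg_right _ (norm_nonneg _)
            exact mul_le_mul_of_nonneg_left h2 (Real.sqrt_nonneg _)
          linarith
        · -- IVT case
          obtain ⟨t₀, ht₀, hφt₀⟩ : ∃ t₀ ∈ Set.Icc 0 T, φ t₀ = a := by
            have hmem : a ∈ Set.Icc (φ 0) (φ T) := ⟨hcase0.le, hcase.le⟩
            obtain ⟨t₀, ht₀, hφt₀⟩ := intermediate_value_Icc hT.le
              (hφcont.mono (fun z hz => hz.1)) hmem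
            exact ⟨t₀, ht₀, hφt₀⟩
          have ht₀pos : 0 < t₀ := by
            rcases ht₀.1.lt_or_eq with h | h
            · exact h
            · exfalso; rw [← h] at hφt₀; linarith
          have h := ML E hEsa hEcomp T hT hET xdag φ hφmono hφcont hφnn Aφ hAcomm hAlb
            ν C hν0 hν1 hC hdecay q hq1 t₀ ht₀ (by rw [hφt₀]; exact ha) x
          rw [hφt₀] at h
          have h1 := hfirst t₀ ht₀pos hφt₀
          linarith
    -- final algebra
    have hT2 : Real.sqrt (C * Gfun ν q) * a ^ (ν-1:ℝ) * ‖Aφ x‖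
        = Real.sqrt (C * Gfun ν q) / c * (Real.sqrt C * a ^ (ν:ℝ) * ‖x‖) := by
      have haν1 : a ^ (ν-1:ℝ) = a ^ (ν:ℝ) / a := by
        rw [Real.rpow_sub ha, Real.rpow_one]
      rw [haν1, hadef]
      field_simp
    rw [hT2, hT1] at hbound
    have hfin : Real.sqrt (C * Gfun ν q) / c * D ≤ D + ε := by
      have h1 : Real.sqrt (C * Gfun ν q) * D ≤ (c + ε * c / D) * D :=
        mul_le_mul_of_nonneg_right hqG.le hD.le
      have h2 : (c + ε * c / D) * D = c * D + ε * c := by field_simp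
      rw [div_mul_eq_mul_div, div_le_iff₀ hc]
      nlinarith
    linarith
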